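/- (Klein's lemma) If $f : \mathbb{R} \to \mathbb{R}$ is convex, then the map $X \mapsto \int f \, dL_n^X = \frac{1}{n}\sum_{i=1}^n f(\lambda_i(X))$ is a convex function on the real vector space of Hermitian $n\times n$ complex matrices. -/

import Mathlib

open Matrix

private lemma row_sum_normSq {n : ℕ} {W : Matrix (Fin n) (Fin n) ℂ}
    (hW : W ∈ Matrix.unitaryGroup (Fin n) ℂ) (i : Fin n) :
    ∑ j, Complex.normSq (W i j) = 1 := by
  have h : (W * star W) i i = (1 : Matrix (Fin n) (Fin n) ℂ) i i := by
    rw [Matrix.mem_unitaryGroup_iff.mp hW]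
  simp only [Matrix.mul_apply, Matrix.star_apply, Matrix.one_apply_eq] at h
  have : ((∑ j, Complex.normSq (W i j) : ℝ) : ℂ) = 1 := by
    push_cast
    rw [← h]
    congr 1; ext j
    rw [Complex.normSq_eq_conj_mul_self]; simp only [RCLike.star_def]; ring
  exact_mod_cast this

private lemma col_sum_normSq {n : ℕ} {W : Matrix (Fin n) (Fin n) ℂ}
    (hW : W ∈ Matrix.unitaryGroup (Fin n) ℂ) (j : Fin n) :
    ∑ i, Complex.normSq (W i j) = 1 := by
  have h : (star W * W) j j = (1 : Matrix (Fin n) (Fin n) ℂ) j j := by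
    rw [Matrix.mem_unitaryGroup_iff'.mp hW]
  simp only [Matrix.mul_apply, Matrix.star_apply, Matrix.one_apply_eq] at h
  have : ((∑ i, Complex.normSq (W i j) : ℝ) : ℂ) = 1 := by
    push_cast
    rw [← h]
    congr 1; ext i
    rw [Complex.normSq_eq_conj_mul_self]; simp only [RCLike.star_def]
  exact_mod_cast this

private lemma jensen_unitary {n : ℕ} (f : ℝ → ℝ) (hf : ConvexOn ℝ Set.univ f)
    {W : Matrix (Fin n) (Fin n) ℂ} (hW : W ∈ Matrix.unitaryGroup (Fin n) ℂ)
    (d : Fin n → ℝ) :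
    ∑ i, f (∑ j, Complex.normSq (W i j) * d j) ≤ ∑ j, f (d j) := by
  calc ∑ i, f (∑ j, Complex.normSq (W i j) * d j)
      ≤ ∑ i, ∑ j, Complex.normSq (W i j) * f (d j) := by
        refine Finset.sum_le_sum fun i _ => ?_
        have := hf.map_sum_le (t := Finset.univ) (w := fun j => Complex.normSq (W i j))
          (p := d) (fun j _ => Complex.normSq_nonneg _) (row_sum_normSq hW i)
          (fun j _ => Set.mem_univ _)
        simpa using this
    _ = ∑ j, f (d j) := by
        rw [Finset.sum_comm]
        refine Finset.sum_congr rfl fun j _ => ?_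
        rw [← Finset.sum_mul, col_sum_normSq hW j, one_mul]

private lemma conj_diag_entry {n : ℕ} (W : Matrix (Fin n) (Fin n) ℂ) (d : Fin n → ℝ)
    (i : Fin n) :
    (W * Matrix.diagonal (fun j => (d j : ℂ)) * star W) i i
      = ((∑ j, Complex.normSq (W i j) * d j : ℝ) : ℂ) := by
  rw [Matrix.mul_assoc]
  simp only [Matrix.mul_apply, Matrix.diagonal_apply, Matrix.star_apply, ite_mul, zero_mul,
    Finset.sum_ite_eq, Finset.mem_univ, if_true]
  push_cast
  refine Finset.sum_congr rfl fun j _ => ?_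
  rw [Complex.normSq_eq_conj_mul_self]
  simp only [RCLike.star_def]
  ring

private lemma unitary_trans {n : ℕ} (U V : Matrix.unitaryGroup (Fin n) ℂ) :
    (star (U : Matrix (Fin n) (Fin n) ℂ)) * (V : Matrix (Fin n) (Fin n) ℂ)
      ∈ Matrix.unitaryGroup (Fin n) ℂ := by
  rw [Matrix.mem_unitaryGroup_iff]
  calc star (U : Matrix (Fin n) (Fin n) ℂ) * V * star (star (U : Matrix (Fin n) (Fin n) ℂ) *
        (V : Matrix (Fin n) (Fin n) ℂ))
      = star (U : Matrix (Fin n) (Fin n) ℂ) * ((V * star (V : Matrix (Fin n) (Fin n) ℂ)) * U) := by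
        rw [Matrix.star_mul, star_star]
        simp only [Matrix.mul_assoc]
    _ = 1 := by
        rw [Matrix.mem_unitaryGroup_iff.mp V.2, one_mul, Matrix.UnitaryGroup.star_mul_self]

private lemma conj_eig {n : ℕ} {A : Matrix (Fin n) (Fin n) ℂ} (hA : A.IsHermitian)
    (U : Matrix.unitaryGroup (Fin n) ℂ) (i : Fin n) :
    (star (U : Matrix (Fin n) (Fin n) ℂ) * A * U) i i
      = ((∑ j, Complex.normSq ((star (U : Matrix (Fin n) (Fin n) ℂ) *
          (hA.eigenvectorUnitary : Matrix (Fin n) (Fin n) ℂ)) i j) * hA.eigenvalues j : ℝ) : ℂ) := by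
  set V := (hA.eigenvectorUnitary : Matrix (Fin n) (Fin n) ℂ)
  set W := star (U : Matrix (Fin n) (Fin n) ℂ) * V with hWdef
  have hspec : A = V * Matrix.diagonal (fun j => (hA.eigenvalues j : ℂ)) * star V := by
    have h := hA.spectral_theorem
    rw [Unitary.conjStarAlgAut_apply] at h
    exact h
  have h2 : star (U : Matrix (Fin n) (Fin n) ℂ) * A * U
      = W * Matrix.diagonal (fun j => (hA.eigenvalues j : ℂ)) * star W := by
    conv_lhs => rw [hspec]
    rw [hWdef, Matrix.star_mul, star_star]
    simp only [Matrix.mul_assoc]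
  rw [h2, conj_diag_entry]

theorem stmt3 {n : ℕ} (f : ℝ → ℝ) (hf : ConvexOn ℝ Set.univ f)
    (X Y : Matrix (Fin n) (Fin n) ℂ) (hX : X.IsHermitian) (hY : Y.IsHermitian)
    (t : ℝ) (ht0 : 0 ≤ t) (ht1 : t ≤ 1)
    (hZ : (t • X + (1 - t) • Y).IsHermitian) :
    (1 / (n : ℝ)) * ∑ i : Fin n, f (hZ.eigenvalues i)
      ≤ t * ((1 / (n : ℝ)) * ∑ i : Fin n, f (hX.eigenvalues i))
        + (1 - t) * ((1 / (n : ℝ)) * ∑ i : Fin n, f (hY.eigenvalues i)) := by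
  set U := hZ.eigenvectorUnitary with hU
  set WX := star (U : Matrix (Fin n) (Fin n) ℂ) * (hX.eigenvectorUnitary : Matrix (Fin n) (Fin n) ℂ)
  set WY := star (U : Matrix (Fin n) (Fin n) ℂ) * (hY.eigenvectorUnitary : Matrix (Fin n) (Fin n) ℂ)
  set aX : Fin n → ℝ := fun i => ∑ j, Complex.normSq (WX i j) * hX.eigenvalues j with haX
  set aY : Fin n → ℝ := fun i => ∑ j, Complex.normSq (WY i j) * hY.eigenvalues j with haY
  have key : ∀ i, hZ.eigenvalues i = t * aX i + (1 - t) * aY i := by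
    intro i
    have hdiag := hZ.conjStarAlgAut_star_eigenvectorUnitary
    rw [Unitary.conjStarAlgAut_star_apply] at hdiag
    have h1 : ((hZ.eigenvalues i : ℝ) : ℂ) = ((t * aX i + (1 - t) * aY i : ℝ) : ℂ) := by
      have e1 := congrArg (fun M => M i i) hdiag.symm
      simp only [Matrix.diagonal_apply_eq, Function.comp_apply] at e1
      have e2 : star (U : Matrix (Fin n) (Fin n) ℂ) * (t • X + (1 - t) • Y) * U
          = t • (star (U : Matrix (Fin n) (Fin n) ℂ) * X * U)
            + (1 - t) • (star (U : Matrix (Fin n) (Fin n) ℂ) * Y * U) := by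
        rw [Matrix.mul_add, Matrix.add_mul]
        rw [Matrix.mul_smul, Matrix.smul_mul, Matrix.mul_smul, Matrix.smul_mul]
      rw [e2] at e1
      have eX := conj_eig hX U i
      have eY := conj_eig hY U i
      have h3 : (t • (star (U : Matrix (Fin n) (Fin n) ℂ) * X * U)
            + (1 - t) • (star (U : Matrix (Fin n) (Fin n) ℂ) * Y * U)) i i
          = ((t * aX i + (1 - t) * aY i : ℝ) : ℂ) := by
        simp only [Matrix.add_apply, Matrix.smul_apply, eX, eY, haX, haY]
        push_cast [Complex.ofReal_sum]
        simp only [Complex.real_smul]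
        push_cast
        ring
      exact e1.trans h3
    exact_mod_cast h1
  have hsum : ∑ i : Fin n, f (hZ.eigenvalues i)
      ≤ t * ∑ i : Fin n, f (hX.eigenvalues i) + (1 - t) * ∑ i : Fin n, f (hY.eigenvalues i) := by
    have step1 : ∑ i : Fin n, f (hZ.eigenvalues i)
        ≤ t * (∑ i, f (aX i)) + (1 - t) * (∑ i, f (aY i)) := by
      rw [Finset.mul_sum, Finset.mul_sum, ← Finset.sum_add_distrib]
      refine Finset.sum_le_sum fun i _ => ?_
      rw [key i]
      have hb : (0:ℝ) ≤ 1 - t := by linarith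
      have hab : t + (1 - t) = 1 := by ring
      have := hf.2 (Set.mem_univ (aX i)) (Set.mem_univ (aY i)) ht0 hb hab
      simpa [smul_eq_mul] using this
    have jX : ∑ i, f (aX i) ≤ ∑ j, f (hX.eigenvalues j) :=
      jensen_unitary f hf (unitary_trans U hX.eigenvectorUnitary) _
    have jY : ∑ i, f (aY i) ≤ ∑ j, f (hY.eigenvalues j) :=
      jensen_unitary f hf (unitary_trans U hY.eigenvectorUnitary) _
    nlinarith [mul_le_mul_of_nonneg_left jX ht0,
      mul_le_mul_of_nonneg_left jY (by linarith : (0:ℝ) ≤ 1 - t)]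
  have hn : (0:ℝ) ≤ 1 / (n : ℝ) := by positivity
  nlinarith [mul_le_mul_of_nonneg_left hsum hn]
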